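/- Let d be a positive integer, σ > 0, Γ ≥ 1, C₀ > 0, M ≥ 0, r > 0, C_sm > 0, and let ρ : ℝ^d → ℝ be a positive function satisfying self-majorization of order r with constant C_sm. Let D be a set of indices ν, each assigned a gender e(ν) ∈ {1, …, 2^d − 1}, a scale ℓ(ν) = 2^{j(ν)} with j(ν) ∈ ℤ, and a corner c(ν) = 2^{j(ν)}·m(ν) with m(ν) ∈ ℤ^d, distinct indices having distinct triples. For each ν ∈ D let ψ_ν : ℝ^d → ℝ be supported in the closed ball B(c(ν), Γ·ℓ(ν)) with |ψ_ν(x)| ≤ C₀ for all x, and let f_ν ∈ ℝ satisfy |f_ν| ≤ M·ℓ(ν)^σ. Let D_b = { ν ∈ D : there exists y ∈ B(c(ν), Γ·ℓ(ν)) with ρ(y) > ℓ(ν) }. Then there exists a constant C > 0, depending only on d, σ, Γ, C₀, r and C_sm, such that for every x ∈ ℝ^d, ∑_{ν ∈ D_b} |f_ν| · |ψ_ν(x)| ≤ C · M · ρ(x)^σ. -/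

import Mathlib

open Real

lemma geom_zsum (σ : ℝ) (hσ : 0 < σ) (L : ℤ) (J : Finset ℤ) (hJ : ∀ j ∈ J, j ≤ L) :
    ∑ j ∈ J, (2:ℝ) ^ ((j:ℝ) * σ) ≤ (2:ℝ) ^ ((L:ℝ) * σ) * (1 - 2 ^ (-σ))⁻¹ := by
  set q : ℝ := (2:ℝ) ^ (-σ) with hq
  have hq0 : 0 ≤ q := le_of_lt (rpow_pos_of_pos two_pos _)
  have hq1 : q < 1 := rpow_lt_one_of_one_lt_of_neg one_lt_two (neg_neg_of_pos hσ)
  have key : ∀ j ∈ J, (2:ℝ) ^ ((j:ℝ) * σ) = (2:ℝ) ^ ((L:ℝ)*σ) * q ^ ((L - j).toNat) := by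
    intro j hj
    have h0 : ((L - j).toNat : ℤ) = L - j := Int.toNat_of_nonneg (sub_nonneg.2 (hJ j hj))
    have h1 : (((L - j).toNat : ℕ) : ℝ) = (L:ℝ) - j := by
      have := congrArg (fun z : ℤ => (z : ℝ)) h0
      push_cast at this
      linarith
    rw [hq, ← Real.rpow_natCast ((2:ℝ)^(-σ)) _, ← Real.rpow_mul (by norm_num), h1,
      ← Real.rpow_add two_pos]
    ring_nf
  rw [Finset.sum_congr rfl key, ← Finset.mul_sum]
  have hinj : ∀ a ∈ J, ∀ b ∈ J, (L - a).toNat = (L - b).toNat → a = b := by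
    intro a ha b hb h
    have h1 := Int.toNat_of_nonneg (sub_nonneg.2 (hJ a ha))
    have h2 := Int.toNat_of_nonneg (sub_nonneg.2 (hJ b hb))
    omega
  have : ∑ j ∈ J, q ^ ((L - j).toNat) = ∑ k ∈ J.image (fun j => (L - j).toNat), q ^ k :=
    (Finset.sum_image hinj).symm
  rw [this]
  have hbd : ∑ k ∈ J.image (fun j => (L - j).toNat), q ^ k ≤ (1 - q)⁻¹ := by
    rw [← tsum_geometric_of_lt_one hq0 hq1]
    exact Summable.sum_le_tsum _ (fun k _ => pow_nonneg hq0 k) (summable_geometric_of_lt_one hq0 hq1)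
  exact mul_le_mul_of_nonneg_left hbd (le_of_lt (rpow_pos_of_pos two_pos _))

lemma count_at_scale (d : ℕ) (Γ : ℝ) (hΓ : 1 ≤ Γ) {D : Type} (e : D → ℕ) (j : D → ℤ)
    (m : D → Fin d → ℤ)
    (he : ∀ ν, 1 ≤ e ν ∧ e ν ≤ 2 ^ d - 1)
    (hinj : Function.Injective (fun ν => (e ν, j ν, m ν)))
    (x : EuclideanSpace ℝ (Fin d)) (jj : ℤ) (t : Finset D)
    (ht : ∀ ν ∈ t, j ν = jj ∧ ∀ i, |x i - 2 ^ jj * (m ν i : ℝ)| ≤ Γ * 2 ^ jj) :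
    t.card ≤ 2 ^ d * (⌊2 * Γ⌋.toNat + 1) ^ d := by
  classical
  have hl : (0:ℝ) < (2:ℝ) ^ jj := zpow_pos two_pos _
  set a : Fin d → ℤ := fun i => ⌈x i / 2 ^ jj - Γ⌉
  set b : Fin d → ℤ := fun i => ⌊x i / 2 ^ jj + Γ⌋
  set T : Finset (ℕ × (Fin d → ℤ)) :=
    (Finset.Icc 1 (2 ^ d - 1)) ×ˢ (Fintype.piFinset fun i => Finset.Icc (a i) (b i))
  have hmem : ∀ ν ∈ t, (e ν, m ν) ∈ T := by
    intro ν hν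
    obtain ⟨hjν, hcoord⟩ := ht ν hν
    refine Finset.mem_product.2 ⟨Finset.mem_Icc.2 (he ν), Fintype.mem_piFinset.2 fun i => ?_⟩
    have h := hcoord i
    have h1 : |x i / 2 ^ jj - (m ν i : ℝ)| ≤ Γ := by
      have heq : x i / 2 ^ jj - (m ν i : ℝ) = (x i - 2 ^ jj * (m ν i : ℝ)) / 2 ^ jj := by
        field_simp
      rw [heq, abs_div, abs_of_pos hl, div_le_iff₀ hl]
      calc |x i - 2 ^ jj * (m ν i : ℝ)| ≤ Γ * 2 ^ jj := hcoord i
        _ = Γ * 2 ^ jj := rfl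
    rw [abs_le] at h1
    refine Finset.mem_Icc.2 ⟨Int.ceil_le.2 (by linarith [h1.2]), Int.le_floor.2 (by linarith [h1.1])⟩
  have hinjOn : Set.InjOn (fun ν => (e ν, m ν)) t := by
    intro ν hν ν' hν' hee
    have h1 := (ht ν hν).1
    have h2 := (ht ν' hν').1
    apply hinj
    simp only [Prod.mk.injEq] at hee ⊢
    exact ⟨hee.1, h1.trans h2.symm, hee.2⟩
  have hcard := Finset.card_le_card_of_injOn _ hmem hinjOn
  refine hcard.trans ?_
  rw [Finset.card_product, Fintype.card_piFinset]
  have h1 : (Finset.Icc 1 (2 ^ d - 1)).card ≤ 2 ^ d := by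
    rw [Nat.card_Icc]
    have : 1 ≤ 2 ^ d := Nat.one_le_two_pow
    omega
  have h2 : ∀ i : Fin d, (Finset.Icc (a i) (b i)).card ≤ ⌊2 * Γ⌋.toNat + 1 := by
    intro i
    rw [Int.card_Icc]
    have hba : b i - a i ≤ ⌊2 * Γ⌋ := by
      refine Int.le_floor.2 ?_
      push_cast
      have h1 : (b i : ℝ) ≤ x i / 2 ^ jj + Γ := Int.floor_le _
      have h2 : x i / 2 ^ jj - Γ ≤ (a i : ℝ) := Int.le_ceil _
      linarith
    have : (0:ℤ) ≤ ⌊2 * Γ⌋ := Int.floor_nonneg.2 (by linarith)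
    omega
  calc (Finset.Icc 1 (2 ^ d - 1)).card * ∏ i, (Finset.Icc (a i) (b i)).card
      ≤ 2 ^ d * ∏ i : Fin d, (⌊2 * Γ⌋.toNat + 1) := by
        exact Nat.mul_le_mul h1 (Finset.prod_le_prod' fun i _ => h2 i)
    _ = 2 ^ d * (⌊2 * Γ⌋.toNat + 1) ^ d := by
        rw [Finset.prod_const]; simp


set_option maxHeartbeats 1000000 in
theorem bad_cubes_sum_bound
    (d : ℕ) (hd : 0 < d) (σ : ℝ) (hσ0 : 0 < σ)
    (Γ : ℝ) (hΓ : 1 ≤ Γ) (C₀ : ℝ) (hC₀ : 0 < C₀)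
    (r : ℝ) (hr : 0 < r) (Csm : ℝ) (hCsm : 0 < Csm) :
    ∃ C > 0, ∀ M : ℝ, 0 ≤ M →
      ∀ ρ : EuclideanSpace ℝ (Fin d) → ℝ, (∀ x, 0 < ρ x) →
      (∀ x y, ρ y ≥ Csm * ρ x * (1 + ‖x - y‖ / ρ x) ^ (-r)) →
      ∀ (D : Type) (e : D → ℕ) (j : D → ℤ) (m : D → Fin d → ℤ),
        (∀ ν, 1 ≤ e ν ∧ e ν ≤ 2 ^ d - 1) →
        Function.Injective (fun ν => (e ν, j ν, m ν)) →
      ∀ c : D → EuclideanSpace ℝ (Fin d),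
        (∀ ν, c ν = (EuclideanSpace.equiv (Fin d) ℝ).symm
            (fun i => (2 : ℝ) ^ (j ν) * (m ν i : ℝ))) →
      ∀ ψ : D → EuclideanSpace ℝ (Fin d) → ℝ,
        (∀ ν, Function.support (ψ ν) ⊆ Metric.closedBall (c ν) (Γ * (2 : ℝ) ^ (j ν))) →
        (∀ ν x, |ψ ν x| ≤ C₀) →
      ∀ f : D → ℝ, (∀ ν, |f ν| ≤ M * ((2 : ℝ) ^ (j ν)) ^ σ) →
      ∀ x, ∑' ν : {ν : D // ∃ y ∈ Metric.closedBall (c ν) (Γ * (2 : ℝ) ^ (j ν)),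
              (2 : ℝ) ^ (j ν) < ρ y},
            ENNReal.ofReal (|f ν| * |ψ ν x|) ≤
          ENNReal.ofReal (C * M * ρ x ^ σ) := by
  classical
  set n₀ : ℕ := ⌊2 * Γ⌋.toNat + 1 with hn₀
  set K : ℝ := (1 + 2 * Γ) ^ r / Csm with hKdef
  have h2Γ : (0:ℝ) < 1 + 2 * Γ := by linarith
  have hP : (0:ℝ) < (1 + 2 * Γ) ^ r := rpow_pos_of_pos h2Γ r
  have hK0 : 0 < K := div_pos hP hCsm
  have hq1 : (2:ℝ) ^ (-σ) < 1 := rpow_lt_one_of_one_lt_of_neg one_lt_two (neg_neg_of_pos hσ0)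
  have hq0' : (0:ℝ) < 1 - 2 ^ (-σ) := by linarith
  have hN0 : (0:ℝ) < ((2 ^ d * n₀ ^ d : ℕ) : ℝ) := by
    have : 0 < 2 ^ d * n₀ ^ d := by positivity
    exact_mod_cast this
  refine ⟨C₀ * ((2 ^ d * n₀ ^ d : ℕ) : ℝ) * K ^ σ * (1 - 2 ^ (-σ))⁻¹, ?_, ?_⟩
  · exact mul_pos (mul_pos (mul_pos hC₀ hN0) (rpow_pos_of_pos hK0 σ)) (inv_pos.2 hq0')
  intro M hM ρ hρ hsm D e j m he hinj c hc ψ hsupp hψ f hf x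
  set L : ℤ := Int.log 2 (K * ρ x) with hLdef
  have hKρ : 0 < K * ρ x := mul_pos hK0 (hρ x)
  rw [ENNReal.tsum_eq_iSup_sum]
  refine iSup_le fun s => ?_
  rw [← ENNReal.ofReal_sum_of_nonneg (fun ν _ => mul_nonneg (abs_nonneg _) (abs_nonneg _))]
  refine ENNReal.ofReal_le_ofReal ?_
  set t := s.filter (fun ν => ψ ν.1 x ≠ 0) with htdef
  have hsum_t : ∑ ν ∈ t, |f ν.1| * |ψ ν.1 x| = ∑ ν ∈ s, |f ν.1| * |ψ ν.1 x| :=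
    Finset.sum_filter_of_ne (fun ν _ hne h0 => hne (by rw [h0, abs_zero, mul_zero]))
  rw [← hsum_t]
  have hci : ∀ ν : D, ∀ i, c ν i = 2 ^ (j ν) * (m ν i : ℝ) := by
    intro ν i; rw [hc ν]; rfl
  have hxball : ∀ ν ∈ t, dist x (c ν.1) ≤ Γ * 2 ^ (j ν.1) := by
    intro ν hν
    have hne : ψ ν.1 x ≠ 0 := (Finset.mem_filter.1 hν).2
    exact Metric.mem_closedBall.1 (hsupp ν.1 hne)
  have hcoord : ∀ ν ∈ t, ∀ i, |x i - 2 ^ (j ν.1) * (m ν.1 i : ℝ)| ≤ Γ * 2 ^ (j ν.1) := by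
    intro ν hν i
    have h1 : dist (x i) (c ν.1 i) ≤ dist x (c ν.1) := by
      rw [EuclideanSpace.dist_eq x (c ν.1)]
      have h2 : dist (x i) (c ν.1 i) ^ 2 ≤ ∑ i', dist (x i') (c ν.1 i') ^ 2 :=
        Finset.single_le_sum (f := fun i' => dist (x i') (c ν.1 i') ^ 2)
          (fun _ _ => sq_nonneg _) (Finset.mem_univ i)
      calc dist (x i) (c ν.1 i) = √(dist (x i) (c ν.1 i) ^ 2) :=
            (Real.sqrt_sq dist_nonneg).symm
        _ ≤ _ := Real.sqrt_le_sqrt h2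
    rw [Real.dist_eq, hci ν.1 i] at h1
    exact h1.trans (hxball ν hν)
  -- scale bound
  have hscale : ∀ ν : {ν : D // ∃ y ∈ Metric.closedBall (c ν) (Γ * (2 : ℝ) ^ (j ν)),
      (2 : ℝ) ^ (j ν) < ρ y}, ν ∈ t → j ν.1 ≤ L := by
    intro ν hν
    obtain ⟨y, hy, hρy⟩ := ν.2
    have hℓ : (0:ℝ) < 2 ^ (j ν.1) := zpow_pos two_pos _
    have hρy0 : 0 < ρ y := hρ y
    have hdyx : ‖y - x‖ ≤ 2 * Γ * 2 ^ (j ν.1) := by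
      have h1 : dist y (c ν.1) ≤ Γ * 2 ^ (j ν.1) := Metric.mem_closedBall.1 hy
      have h2 := hxball ν hν
      calc ‖y - x‖ = dist y x := (dist_eq_norm y x).symm
        _ ≤ dist y (c ν.1) + dist x (c ν.1) := dist_triangle_right y x (c ν.1)
        _ ≤ Γ * 2 ^ (j ν.1) + Γ * 2 ^ (j ν.1) := add_le_add h1 h2
        _ = 2 * Γ * 2 ^ (j ν.1) := by ring
    have hbase : 1 + ‖y - x‖ / ρ y ≤ 1 + 2 * Γ := by
      have : ‖y - x‖ / ρ y ≤ 2 * Γ := by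
        rw [div_le_iff₀ hρy0]
        calc ‖y - x‖ ≤ 2 * Γ * 2 ^ (j ν.1) := hdyx
          _ ≤ 2 * Γ * ρ y := by nlinarith
      linarith
    have hbpos : 0 < 1 + ‖y - x‖ / ρ y := by positivity
    have h2 : (1 + 2 * Γ) ^ (-r) ≤ (1 + ‖y - x‖ / ρ y) ^ (-r) :=
      rpow_le_rpow_of_nonpos hbpos hbase (neg_nonpos.2 hr.le)
    have h3 : Csm * ρ y * (1 + 2 * Γ) ^ (-r) ≤ ρ x := by
      refine le_trans ?_ (hsm y x)
      rw [mul_assoc, mul_assoc]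
      exact mul_le_mul_of_nonneg_left
        (mul_le_mul_of_nonneg_left h2 hρy0.le) hCsm.le
    have h4 : Csm * 2 ^ (j ν.1) * (1 + 2 * Γ) ^ (-r) ≤ ρ x := by
      have hPa : (0:ℝ) < (1 + 2 * Γ) ^ (-r) := rpow_pos_of_pos h2Γ _
      have hstep : Csm * 2 ^ (j ν.1) * (1 + 2 * Γ) ^ (-r)
          ≤ Csm * ρ y * (1 + 2 * Γ) ^ (-r) := by
        refine mul_le_mul_of_nonneg_right ?_ hPa.le
        exact mul_le_mul_of_nonneg_left hρy.le hCsm.le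
      linarith
    have h5 : (2:ℝ) ^ (j ν.1) ≤ K * ρ x := by
      rw [Real.rpow_neg h2Γ.le] at h4
      rw [hKdef]
      rw [div_mul_eq_mul_div, le_div_iff₀ hCsm]
      calc (2:ℝ) ^ (j ν.1) * Csm
          = (Csm * 2 ^ (j ν.1) * ((1 + 2 * Γ) ^ r)⁻¹) * (1 + 2 * Γ) ^ r := by
            field_simp
        _ ≤ ρ x * (1 + 2 * Γ) ^ r := mul_le_mul_of_nonneg_right h4 hP.le
        _ = (1 + 2 * Γ) ^ r * ρ x := by ring
    have h6 : (2:ℝ) ^ (j ν.1) < (2:ℝ) ^ (L + 1) := by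
      refine lt_of_le_of_lt h5 ?_
      have := Int.lt_zpow_succ_log_self (b := 2) one_lt_two (K * ρ x)
      rw [hLdef]; exact_mod_cast this
    have := (zpow_lt_zpow_iff_right₀ (one_lt_two (α := ℝ))).1 h6
    omega
  -- termwise bound
  have hrpow : ∀ jj : ℤ, ((2:ℝ) ^ jj) ^ σ = (2:ℝ) ^ ((jj:ℝ) * σ) := by
    intro jj
    rw [← Real.rpow_intCast 2 jj, ← Real.rpow_mul (by norm_num)]
  have hterm : ∀ ν ∈ t, |f ν.1| * |ψ ν.1 x| ≤ C₀ * M * (2:ℝ) ^ ((j ν.1 : ℝ) * σ) := by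
    intro ν hν
    have h1 : |f ν.1| ≤ M * (2:ℝ) ^ ((j ν.1 : ℝ) * σ) := by
      have := hf ν.1; rwa [hrpow (j ν.1)] at this
    calc |f ν.1| * |ψ ν.1 x| ≤ (M * (2:ℝ) ^ ((j ν.1 : ℝ) * σ)) * C₀ :=
          mul_le_mul h1 (hψ ν.1 x) (abs_nonneg _) (by positivity)
      _ = C₀ * M * (2:ℝ) ^ ((j ν.1 : ℝ) * σ) := by ring
  -- counting
  have hcount : ∀ jj ∈ t.image (fun ν => j ν.1),
      ((t.filter fun ν => j ν.1 = jj).card : ℝ) ≤ ((2 ^ d * n₀ ^ d : ℕ) : ℝ) := by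
    intro jj _
    have := count_at_scale d Γ hΓ (fun ν => e ν.1) (fun ν => j ν.1) (fun ν => m ν.1)
      (fun ν => he ν.1)
      (fun ν ν' hh => Subtype.ext (hinj (by simpa using hh)))
      x jj (t.filter fun ν => j ν.1 = jj) ?_
    · exact_mod_cast this
    · intro ν hν
      have hmem := Finset.mem_filter.1 hν
      have hjj : j ν.1 = jj := hmem.2
      refine ⟨hjj, fun i => ?_⟩
      have := hcoord ν hmem.1 i
      rwa [hjj] at this
  have himL : ∀ jj ∈ t.image (fun ν => j ν.1), jj ≤ L := by
    intro jj hjj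
    obtain ⟨ν, hν, hjν⟩ := Finset.mem_image.1 hjj
    exact hjν ▸ hscale ν hν
  -- assemble
  have h2L : (2:ℝ) ^ ((L:ℝ) * σ) ≤ K ^ σ * ρ x ^ σ := by
    have hlog : (2:ℝ) ^ L ≤ K * ρ x := by
      have := Int.zpow_log_le_self (b := 2) one_lt_two hKρ
      rw [hLdef]; exact_mod_cast this
    calc (2:ℝ) ^ ((L:ℝ) * σ) = ((2:ℝ) ^ L) ^ σ := (hrpow L).symm
      _ ≤ (K * ρ x) ^ σ := rpow_le_rpow (zpow_pos two_pos L).le hlog hσ0.le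
      _ = K ^ σ * ρ x ^ σ := Real.mul_rpow hK0.le (hρ x).le
  calc ∑ ν ∈ t, |f ν.1| * |ψ ν.1 x|
      ≤ ∑ ν ∈ t, C₀ * M * (2:ℝ) ^ ((j ν.1 : ℝ) * σ) := Finset.sum_le_sum hterm
    _ = ∑ jj ∈ t.image (fun ν => j ν.1),
          (t.filter fun ν => j ν.1 = jj).card • (C₀ * M * (2:ℝ) ^ ((jj : ℝ) * σ)) :=
        by
          have h := Finset.sum_comp (s := t)
            (fun jj : ℤ => C₀ * M * (2:ℝ) ^ ((jj : ℝ) * σ)) (fun ν => j ν.1)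
          convert h using 2
    _ ≤ ∑ jj ∈ t.image (fun ν => j ν.1),
          ((2 ^ d * n₀ ^ d : ℕ) : ℝ) * (C₀ * M * (2:ℝ) ^ ((jj : ℝ) * σ)) := by
        refine Finset.sum_le_sum fun jj hjj => ?_
        rw [nsmul_eq_mul]
        exact mul_le_mul_of_nonneg_right (hcount jj hjj) (by positivity)
    _ = ((2 ^ d * n₀ ^ d : ℕ) : ℝ) * (C₀ * M) *
          ∑ jj ∈ t.image (fun ν => j ν.1), (2:ℝ) ^ ((jj : ℝ) * σ) := by
        rw [Finset.mul_sum]; exact Finset.sum_congr rfl fun jj _ => by ring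
    _ ≤ ((2 ^ d * n₀ ^ d : ℕ) : ℝ) * (C₀ * M) *
          ((2:ℝ) ^ ((L:ℝ) * σ) * (1 - 2 ^ (-σ))⁻¹) := by
        refine mul_le_mul_of_nonneg_left (geom_zsum σ hσ0 L _ himL) ?_
        positivity
    _ ≤ ((2 ^ d * n₀ ^ d : ℕ) : ℝ) * (C₀ * M) *
          ((K ^ σ * ρ x ^ σ) * (1 - 2 ^ (-σ))⁻¹) := by
        refine mul_le_mul_of_nonneg_left
          (mul_le_mul_of_nonneg_right h2L (inv_pos.2 hq0').le) ?_
        positivity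
    _ = C₀ * ((2 ^ d * n₀ ^ d : ℕ) : ℝ) * K ^ σ * (1 - 2 ^ (-σ))⁻¹ * M * ρ x ^ σ := by
        ring
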